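/- arXiv:2303.08407 — 2 statements merged into one kernel-verified Lean document; each statement's English description precedes it below -/
import Mathlib

section
/- Fix α ≥ 1. For the Bell-diagonal state ρ_λ, if any of A₀, A₁ = ±σ_z, ±σ_x and B₀ = cosθ σ_z + sinθ σ_x, B₁ = cosθ σ_z − sinθ σ_x with tanθ = (λ₁−λ₂+λ₃−λ₄)/[α(λ₁+λ₂−λ₃−λ₄)], then the α-CHSH value Tr[ρ_λ Ŝ_α] attains the maximum 2√(α²(λ₁+λ₂−λ₃−λ₄)² + (λ₁−λ₂+λ₃−λ₄)²). -/
open Matrix Kronecker Complex Real ComplexOrder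

/-- 2×2 complex matrices (one qubit). -/
abbrev M2 := Matrix (Fin 2) (Fin 2) ℂ
/-- 4×4 complex matrices (two qubits), indexed by `Fin 2 × Fin 2`. -/
abbrev M4 := Matrix (Fin 2 × Fin 2) (Fin 2 × Fin 2) ℂ

noncomputable def σx : M2 := !![0, 1; 1, 0]
noncomputable def σy : M2 := !![0, -Complex.I; Complex.I, 0]
noncomputable def σz : M2 := !![1, 0; 0, -1]

/-- A ±1-valued qubit observable: Hermitian involution. -/
def IsObs (A : M2) : Prop := A.IsHermitian ∧ A * A = 1

/-- A two-qubit density operator. -/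
def IsState (ρ : M4) : Prop := ρ.PosSemidef ∧ ρ.trace = 1

/-- The α-CHSH Bell operator. -/
noncomputable def Sop (α : ℝ) (A0 A1 B0 B1 : M2) : M4 :=
  (α : ℂ) • (A0 ⊗ₖ B0 + A0 ⊗ₖ B1) + A1 ⊗ₖ B0 - A1 ⊗ₖ B1

/-- The α-CHSH Bell value of a state with given observables. -/
noncomputable def BellValue (ρ : M4) (α : ℝ) (A0 A1 B0 B1 : M2) : ℂ :=
  (ρ * Sop α A0 A1 B0 B1).trace

/-- Computational basis vectors of ℂ²⊗ℂ². -/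
def ket (i j : Fin 2) : Fin 2 × Fin 2 → ℂ := fun p => if p = (i, j) then 1 else 0

noncomputable def PhiP : Fin 2 × Fin 2 → ℂ := ((Real.sqrt 2 : ℂ))⁻¹ • (ket 0 0 + ket 1 1)
noncomputable def PhiM : Fin 2 × Fin 2 → ℂ := ((Real.sqrt 2 : ℂ))⁻¹ • (ket 0 0 - ket 1 1)
noncomputable def PsiP : Fin 2 × Fin 2 → ℂ := ((Real.sqrt 2 : ℂ))⁻¹ • (ket 0 1 + ket 1 0)
noncomputable def PsiM : Fin 2 × Fin 2 → ℂ := ((Real.sqrt 2 : ℂ))⁻¹ • (ket 0 1 - ket 1 0)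

/-- Rank-one projector |v⟩⟨v|. -/
noncomputable def proj (v : Fin 2 × Fin 2 → ℂ) : M4 := Matrix.vecMulVec v (star v)

/-- Bell-diagonal two-qubit state. -/
noncomputable def BellDiag (l1 l2 l3 l4 : ℝ) : M4 :=
  (l1 : ℂ) • proj PhiP + (l2 : ℂ) • proj PhiM + (l3 : ℂ) • proj PsiP + (l4 : ℂ) • proj PsiM

noncomputable def YY : M4 := σy ⊗ₖ σy

attribute [local instance] Classical.propDecidable

/-- The positive semidefinite square root of a positive semidefinite matrix
(the definition Mathlib had in December 2024, since removed). -/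
noncomputable def Matrix.PosSemidef.sqrt {n : Type*} [Fintype n] [DecidableEq n]
    {A : Matrix n n ℂ} (hA : A.PosSemidef) : Matrix n n ℂ :=
  hA.1.eigenvectorUnitary.1 * diagonal ((↑) ∘ (√·) ∘ hA.1.eigenvalues) *
    (star hA.1.eigenvectorUnitary : Matrix n n ℂ)

/-- Concurrence of a two-qubit state: `max {0, μ₁ − μ₂ − μ₃ − μ₄}` where the `μᵢ` are the
decreasingly ordered square roots of the eigenvalues of `√ρ (σy⊗σy) ρ* (σy⊗σy) √ρ`
(for the decreasingly ordered values, `μ₁ − μ₂ − μ₃ − μ₄ = 2 max μᵢ − ∑ μᵢ`). -/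
noncomputable def concurrence (ρ : M4) : ℝ :=
  if hρ : ρ.PosSemidef then
    if hX : (hρ.sqrt * (YY * ρ.map (starRingEnd ℂ) * YY) * hρ.sqrt).IsHermitian then
      let μ : Fin 2 × Fin 2 → ℝ := fun p => Real.sqrt (hX.eigenvalues p)
      max 0 (2 * (Finset.univ.sup' Finset.univ_nonempty μ) - ∑ p, μ p)
    else 0
  else 0


lemma bd_zz (l1 l2 l3 l4 : ℝ) :
    ((BellDiag l1 l2 l3 l4) * (σz ⊗ₖ σz)).trace = ((l1+l2-l3-l4 : ℝ) : ℂ) := by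
  have h2 : ((Real.sqrt 2 : ℂ))⁻¹ * ((Real.sqrt 2 : ℂ))⁻¹ = 1/2 := by
    rw [← mul_inv]
    norm_num [← Complex.ofReal_mul, Real.mul_self_sqrt]
  simp only [Matrix.trace, Matrix.diag, Matrix.mul_apply, BellDiag, proj, PhiP, PhiM, PsiP, PsiM,
    ket, σz, Matrix.vecMulVec_apply, Pi.smul_apply, Pi.add_apply, Pi.sub_apply, star_smul,
    Pi.star_apply, RCLike.star_def, map_inv₀, Complex.conj_ofReal, smul_eq_mul,
    Matrix.add_apply, Matrix.smul_apply, Matrix.kroneckerMap_apply,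
    Fintype.sum_prod_type, Fin.sum_univ_two, Matrix.cons_val', Matrix.cons_val_zero,
    Matrix.cons_val_one, Matrix.head_cons, Matrix.empty_val', Matrix.cons_val_fin_one,
    Matrix.head_fin_const]
  norm_num [Prod.ext_iff]
  ring_nf
  rw [show ((Real.sqrt 2:ℂ))⁻¹^2 = 1/2 by rw [sq]; exact h2]
  ring

lemma bd_xx (l1 l2 l3 l4 : ℝ) :
    ((BellDiag l1 l2 l3 l4) * (σx ⊗ₖ σx)).trace = ((l1-l2+l3-l4 : ℝ) : ℂ) := by
  have h2 : ((Real.sqrt 2 : ℂ))⁻¹ * ((Real.sqrt 2 : ℂ))⁻¹ = 1/2 := by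
    rw [← mul_inv]
    norm_num [← Complex.ofReal_mul, Real.mul_self_sqrt]
  simp only [Matrix.trace, Matrix.diag, Matrix.mul_apply, BellDiag, proj, PhiP, PhiM, PsiP, PsiM,
    ket, σx, Matrix.vecMulVec_apply, Pi.smul_apply, Pi.add_apply, Pi.sub_apply, star_smul,
    Pi.star_apply, RCLike.star_def, map_inv₀, Complex.conj_ofReal, smul_eq_mul,
    Matrix.add_apply, Matrix.smul_apply, Matrix.kroneckerMap_apply,
    Fintype.sum_prod_type, Fin.sum_univ_two, Matrix.cons_val', Matrix.cons_val_zero,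
    Matrix.cons_val_one, Matrix.head_cons, Matrix.empty_val', Matrix.cons_val_fin_one,
    Matrix.head_fin_const]
  norm_num [Prod.ext_iff]
  ring_nf
  rw [show ((Real.sqrt 2:ℂ))⁻¹^2 = 1/2 by rw [sq]; exact h2]
  ring

lemma trig (a b : ℝ) (ha : 0 < a) :
    2*a*Real.cos (Real.arctan (b/a)) + 2*b*Real.sin (Real.arctan (b/a))
      = 2*Real.sqrt (a^2+b^2) := by
  have hs : Real.sqrt (1 + (b/a)^2) = Real.sqrt (a^2+b^2) / a := by
    rw [eq_div_iff ha.ne', ← Real.sqrt_sq ha.le, ← Real.sqrt_mul (by positivity)]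
    congr 1
    field_simp
    exact (Real.sq_sqrt (sq_nonneg a)).symm
  have hpos : 0 < Real.sqrt (a^2+b^2) := Real.sqrt_pos.2 (by positivity)
  rw [Real.cos_arctan, Real.sin_arctan, hs]
  have h : Real.sqrt (a^2+b^2) ^ 2 = a^2 + b^2 := Real.sq_sqrt (by positivity)
  field_simp
  nlinarith [h]

lemma real_key (α l1 l2 l3 l4 : ℝ) (hα : 1 ≤ α)
    (h12 : l2 ≤ l1) (h23 : l3 ≤ l2) (h34 : l4 ≤ l3) :
    2*α*Real.cos (Real.arctan ((l1 - l2 + l3 - l4) / (α * (l1 + l2 - l3 - l4))))*(l1+l2-l3-l4)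
      + 2*Real.sin (Real.arctan ((l1 - l2 + l3 - l4) / (α * (l1 + l2 - l3 - l4))))*(l1-l2+l3-l4)
      = 2*Real.sqrt (α^2*(l1+l2-l3-l4)^2 + (l1-l2+l3-l4)^2) := by
  have hc3 : 0 ≤ l1 + l2 - l3 - l4 := by linarith
  rcases hc3.eq_or_lt with h0 | hpos
  · have hc1 : l1 - l2 + l3 - l4 = 0 := by linarith
    rw [hc1, ← h0]
    simp
  · have ha : 0 < α * (l1 + l2 - l3 - l4) := by nlinarith
    have := trig (α * (l1 + l2 - l3 - l4)) (l1 - l2 + l3 - l4) ha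
    rw [show α^2*(l1+l2-l3-l4)^2 + (l1-l2+l3-l4)^2
        = (α*(l1+l2-l3-l4))^2 + (l1-l2+l3-l4)^2 by ring]
    linarith

/-- For a Bell-diagonal state with ordered eigenvalues, the observables
`A₀ = ±σz`, `A₁ = ±σx`, `B₀ = ±(cosθ σz + sinθ σx)`, `B₁ = ±(cosθ σz − sinθ σx)`
with `tanθ = (λ₁−λ₂+λ₃−λ₄)/[α(λ₁+λ₂−λ₃−λ₄)]` attain the maximal α-CHSH value
`2√(α²(λ₁+λ₂−λ₃−λ₄)² + (λ₁−λ₂+λ₃−λ₄)²)`. -/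
theorem bellDiag_optimal_measurements (α l1 l2 l3 l4 : ℝ) (hα : 1 ≤ α)
    (h12 : l2 ≤ l1) (h23 : l3 ≤ l2) (h34 : l4 ≤ l3) (h4 : 0 ≤ l4)
    (hsum : l1 + l2 + l3 + l4 = 1)
    (ε : ℝ) (hε : ε = 1 ∨ ε = -1) :
    let θ := Real.arctan ((l1 - l2 + l3 - l4) / (α * (l1 + l2 - l3 - l4)))
    let A0 : M2 := (ε : ℂ) • σz
    let A1 : M2 := (ε : ℂ) • σx
    let B0 : M2 := (ε : ℂ) • ((Real.cos θ : ℂ) • σz + (Real.sin θ : ℂ) • σx)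
    let B1 : M2 := (ε : ℂ) • ((Real.cos θ : ℂ) • σz - (Real.sin θ : ℂ) • σx)
    BellValue (BellDiag l1 l2 l3 l4) α A0 A1 B0 B1 =
      ((2 * Real.sqrt (α ^ 2 * (l1 + l2 - l3 - l4) ^ 2 + (l1 - l2 + l3 - l4) ^ 2) : ℝ) : ℂ) := by
  intro θ A0 A1 B0 B1
  have hS : Sop α A0 A1 B0 B1
      = ((2*α*Real.cos θ : ℝ) : ℂ) • (σz ⊗ₖ σz) + ((2*Real.sin θ : ℝ) : ℂ) • (σx ⊗ₖ σx) := by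
    rcases hε with rfl | rfl <;>
    · simp only [A0, A1, B0, B1, Sop, sub_eq_add_neg, ← neg_smul, smul_add,
        Matrix.smul_kronecker, Matrix.kronecker_smul, Matrix.kronecker_add,
        Matrix.add_kronecker, smul_smul]
      push_cast
      module
  rw [BellValue, hS, mul_add, Matrix.mul_smul, Matrix.mul_smul, Matrix.trace_add,
    Matrix.trace_smul, Matrix.trace_smul, bd_zz, bd_xx]
  have key := real_key α l1 l2 l3 l4 hα h12 h23 h34
  simp only [smul_eq_mul, ← Complex.ofReal_mul, ← Complex.ofReal_add, Complex.ofReal_inj]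
  linarith [key]
end

section
/- Let α ≥ 1, and for a two-qubit state ρ define the maximal α-CHSH value S*(ρ) = max over ±1-valued qubit observables of Tr[ρ Ŝ_α]. If ρ is separable, then S*(ρ) ≤ 2α. -/
open Matrix Kronecker Complex Real ComplexOrder

attribute [local instance] Classical.propDecidable

/-- A two-qubit state is separable if it is a convex combination of product states. -/
def IsSepState (ρ : M4) : Prop :=
  ∃ (n : ℕ) (p : Fin n → ℝ) (ρA ρB : Fin n → M2),
    (∀ i, 0 ≤ p i) ∧ (∑ i, p i) = 1 ∧
    (∀ i, (ρA i).PosSemidef ∧ (ρA i).trace = 1) ∧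
    (∀ i, (ρB i).PosSemidef ∧ (ρB i).trace = 1) ∧
    ρ = ∑ i, (p i : ℂ) • (ρA i ⊗ₖ ρB i)


lemma trace_nonneg_of_psd' {n : Type*} [Fintype n] {M : Matrix n n ℂ}
    (h : M.PosSemidef) : 0 ≤ M.trace := by
  classical
  apply Finset.sum_nonneg
  intro i _
  exact h.diag_nonneg

lemma trace_mul_nonneg' {n : Type*} [Fintype n] [DecidableEq n] {M N : Matrix n n ℂ}
    (hM : M.PosSemidef) (hN : N.PosSemidef) : 0 ≤ (M * N).trace := by
  open scoped MatrixOrder in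
  obtain ⟨B, rfl⟩ := CStarAlgebra.nonneg_iff_eq_star_mul_self.mp hM.nonneg
  rw [Matrix.mul_assoc, Matrix.trace_mul_comm]
  exact trace_nonneg_of_psd' (hN.mul_mul_conjTranspose_same B)

lemma obs_exp {ρ A : M2} (hρ : ρ.PosSemidef) (ht : ρ.trace = 1) (hA : IsObs A) :
    ∃ a : ℝ, (ρ * A).trace = (a : ℂ) ∧ -1 ≤ a ∧ a ≤ 1 := by
  obtain ⟨hAh, hA2⟩ := hA
  have hreal : (starRingEnd ℂ) ((ρ * A).trace) = (ρ * A).trace := by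
    have := Matrix.trace_conjTranspose (ρ * A)
    rw [Matrix.conjTranspose_mul, hAh.eq, hρ.isHermitian.eq, Matrix.trace_mul_comm] at this
    exact this.symm
  obtain ⟨a, ha⟩ := Complex.conj_eq_iff_real.mp hreal
  refine ⟨a, ha, ?_, ?_⟩
  · have hsq : (1 + A)ᴴ * (1 + A) = 2 • (1 + A) := by
      rw [Matrix.conjTranspose_add, Matrix.conjTranspose_one, hAh.eq]
      rw [Matrix.add_mul, Matrix.mul_add, Matrix.mul_add, hA2]
      simp [two_smul]
      abel
    have := trace_mul_nonneg' hρ (Matrix.posSemidef_conjTranspose_mul_self (1 + A))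
    rw [hsq] at this
    have htr : (ρ * (2 • (1 + A))).trace = (((2 * (1 + a) : ℝ)) : ℂ) := by
      rw [Matrix.mul_smul, Matrix.trace_smul, Matrix.mul_add, Matrix.trace_add,
        Matrix.mul_one, ht, ha]
      push_cast
      ring
    rw [htr] at this
    have := Complex.zero_le_real.mp this
    linarith
  · have hsq : (1 - A)ᴴ * (1 - A) = 2 • (1 - A) := by
      rw [Matrix.conjTranspose_sub, Matrix.conjTranspose_one, hAh.eq]
      rw [Matrix.sub_mul, Matrix.mul_sub, Matrix.mul_sub, hA2]
      simp [two_smul]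
      abel
    have := trace_mul_nonneg' hρ (Matrix.posSemidef_conjTranspose_mul_self (1 - A))
    rw [hsq] at this
    have htr : (ρ * (2 • (1 - A))).trace = (((2 * (1 - a) : ℝ)) : ℂ) := by
      rw [Matrix.mul_smul, Matrix.trace_smul, Matrix.mul_sub, Matrix.trace_sub,
        Matrix.mul_one, ht, ha]
      push_cast
      ring
    rw [htr] at this
    have := Complex.zero_le_real.mp this
    linarith

lemma chsh_scalar (α a0 a1 b0 b1 : ℝ) (hα : 1 ≤ α)
    (h0l : -1 ≤ a0) (h0u : a0 ≤ 1) (h1l : -1 ≤ a1) (h1u : a1 ≤ 1)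
    (h2l : -1 ≤ b0) (h2u : b0 ≤ 1) (h3l : -1 ≤ b1) (h3u : b1 ≤ 1) :
    α * (a0 * b0 + a0 * b1) + a1 * b0 - a1 * b1 ≤ 2 * α := by
  have hα0 : (0:ℝ) ≤ α := by linarith
  have habs : |b0 + b1| + |b0 - b1| ≤ 2 := by
    rcases abs_cases (b0 + b1) with ⟨h, _⟩ | ⟨h, _⟩ <;>
      rcases abs_cases (b0 - b1) with ⟨h2, _⟩ | ⟨h2, _⟩ <;> linarith
  have k1 : a0 * (b0 + b1) ≤ |b0 + b1| := by
    calc a0 * (b0 + b1) ≤ |a0 * (b0 + b1)| := le_abs_self _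
      _ = |a0| * |b0 + b1| := abs_mul _ _
      _ ≤ 1 * |b0 + b1| :=
        mul_le_mul_of_nonneg_right (abs_le.mpr ⟨h0l, h0u⟩) (abs_nonneg _)
      _ = |b0 + b1| := one_mul _
  have k2 : a1 * (b0 - b1) ≤ |b0 - b1| := by
    calc a1 * (b0 - b1) ≤ |a1 * (b0 - b1)| := le_abs_self _
      _ = |a1| * |b0 - b1| := abs_mul _ _
      _ ≤ 1 * |b0 - b1| :=
        mul_le_mul_of_nonneg_right (abs_le.mpr ⟨h1l, h1u⟩) (abs_nonneg _)
      _ = |b0 - b1| := one_mul _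
  have k3 : α * (a0 * (b0 + b1)) ≤ α * |b0 + b1| := mul_le_mul_of_nonneg_left k1 hα0
  nlinarith [abs_nonneg (b0 - b1), mul_le_mul_of_nonneg_left habs hα0]

/-- For a separable two-qubit state, every α-CHSH value is at most `2α`. -/
theorem separable_CHSH_bound (α : ℝ) (hα : 1 ≤ α) (ρ : M4)
    (hρ : IsState ρ) (hsep : IsSepState ρ) :
    ∀ (A0 A1 B0 B1 : M2) (s : ℝ),
      IsObs A0 → IsObs A1 → IsObs B0 → IsObs B1 →
      BellValue ρ α A0 A1 B0 B1 = (s : ℂ) → s ≤ 2 * α := by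
  intro A0 A1 B0 B1 s hA0 hA1 hB0 hB1 hs
  obtain ⟨n, p, ρA, ρB, hp, hpsum, hρA, hρB, hρeq⟩ := hsep
  choose a0 ha0 ha0l ha0u using fun i => obs_exp (hρA i).1 (hρA i).2 hA0
  choose a1 ha1 ha1l ha1u using fun i => obs_exp (hρA i).1 (hρA i).2 hA1
  choose b0 hb0 hb0l hb0u using fun i => obs_exp (hρB i).1 (hρB i).2 hB0
  choose b1 hb1 hb1l hb1u using fun i => obs_exp (hρB i).1 (hρB i).2 hB1
  set r : Fin n → ℝ := fun i =>
    α * (a0 i * b0 i + a0 i * b1 i) + a1 i * b0 i - a1 i * b1 i with hr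
  have hterm : ∀ i, ((ρA i ⊗ₖ ρB i) * Sop α A0 A1 B0 B1).trace = ((r i : ℝ) : ℂ) := by
    intro i
    simp only [Sop, Matrix.mul_add, Matrix.mul_sub, Matrix.mul_smul,
      ← Matrix.mul_kronecker_mul, Matrix.trace_add, Matrix.trace_sub, Matrix.trace_smul,
      Matrix.trace_kronecker, smul_eq_mul, ha0 i, ha1 i, hb0 i, hb1 i, hr]
    push_cast
    ring
  have hBell : BellValue ρ α A0 A1 B0 B1 = ((∑ i, p i * r i : ℝ) : ℂ) := by
    rw [BellValue, hρeq, Finset.sum_mul, Matrix.trace_sum]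
    push_cast
    refine Finset.sum_congr rfl fun i _ => ?_
    rw [Matrix.smul_mul, Matrix.trace_smul, hterm i]
    simp [smul_eq_mul]
  have hs' : s = ∑ i, p i * r i := by
    have := hs.symm.trans hBell
    exact_mod_cast this
  rw [hs']
  calc ∑ i, p i * r i ≤ ∑ i, p i * (2 * α) := by
        refine Finset.sum_le_sum fun i _ => ?_
        exact mul_le_mul_of_nonneg_left
          (chsh_scalar α (a0 i) (a1 i) (b0 i) (b1 i) hα (ha0l i) (ha0u i) (ha1l i) (ha1u i)
            (hb0l i) (hb0u i) (hb1l i) (hb1u i)) (hp i)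
    _ = 2 * α := by rw [← Finset.sum_mul, hpsum, one_mul]
end
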